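/- If V is an F-vector space with dim(V) ≥ card(F), then |G^vec| = dim(V) + 1. That is: (1) for every sequence of dim(V) vectors there exists a vector in G^vec-general position to it, and (2) for a basis e_1,...,e_{n-1} of V (n = dim V + 1), no vector of V is in G^vec-general position to the sequence (e_1,...,e_{n-1}, e_1 + e_2 + ... + e_{n-1}). -/

import Mathlib

open scoped Classical

/-- The linear-independence general position relation `G^vec`: `x` is in general
position to `y` iff every vanishing linear combination of the entries of `x` and
`y` with at most `dim V` nonzero coefficients has all coefficients on `x` equal
to zero. (The bound is read as a cardinal so that it is no restriction when `V`
is infinite-dimensional.) -/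
def Gvec (F : Type*) {V : Type*} [Field F] [AddCommGroup V] [Module F V]
    (x y : List V) : Prop :=
  ∀ (a : Fin x.length → F) (b : Fin y.length → F),
    (((Finset.univ.filter fun i => a i ≠ 0).card +
        (Finset.univ.filter fun j => b j ≠ 0).card : ℕ) : Cardinal) ≤ Module.rank F V →
      (∑ i, a i • x.get i) + (∑ j, b j • y.get j) = 0 → ∀ i, a i = 0

private lemma fin_one_eq {L : ℕ} (hL : L = 1) (k l : Fin L) : k = l := by
  subst hL; exact Subsingleton.elim k l

private lemma sum_fin_one {M : Type*} [AddCommMonoid M] {L : ℕ} (hL : L = 1)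
    (f : Fin L → M) : ∑ k, f k = f ⟨0, hL ▸ Nat.one_pos⟩ := by
  subst hL; exact Fin.sum_univ_one f

private lemma card_filter_fin_one {L : ℕ} (hL : L = 1) (p : Fin L → Prop)
    [DecidablePred p] : (Finset.univ.filter p).card ≤ 1 := by
  subst hL
  simpa using Finset.card_filter_le Finset.univ p


/-- If `dim V ≥ card F` then `|G^vec| = dim V + 1`: (1) every sequence of
`dim V` vectors admits a vector in `G^vec`-general position to it, and (2) for a
basis `e₁,…,e_{n-1}` of `V`, no vector of `V` is in `G^vec`-general position to
the sequence `(e₁,…,e_{n-1}, e₁ + ⋯ + e_{n-1})`. -/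
theorem Gvec_bound_of_dim_ge_card (F V : Type*) [Field F] [Fintype F]
    [AddCommGroup V] [Module F V] [FiniteDimensional F V]
    (h : Fintype.card F ≤ Module.finrank F V) :
    (∀ b : List V, b.length = Module.finrank F V → ∃ x : V, Gvec F [x] b) ∧
    (∀ e : Module.Basis (Fin (Module.finrank F V)) F V, ∀ x : V,
      ¬ Gvec F [x] (List.ofFn e ++ [∑ i, e i])) := by
  have hF2 : 2 ≤ Fintype.card F := Fintype.one_lt_card
  set n := Module.finrank F V with hn
  have hn2 : 2 ≤ n := le_trans hF2 h
  have hrank : Module.rank F V = (n : Cardinal) := (Module.finrank_eq_rank F V).symm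
  constructor
  · intro b hb
    by_cases hind : LinearIndependent F b.get
    · refine ⟨∑ j, b.get j, ?_⟩
      intro a c hcard hsum i
      by_contra h0
      have hL : ([(∑ j, b.get j)].length) = 1 := rfl
      set i0 : Fin ([(∑ j, b.get j)].length) := ⟨0, hL ▸ Nat.one_pos⟩ with hi0
      have hi : i = i0 := fin_one_eq hL i i0
      rw [hi] at h0
      have h1 : ∑ k : Fin ([(∑ j, b.get j)].length), a k • [(∑ j, b.get j)].get k
          = a i0 • ∑ j, b.get j := sum_fin_one hL _
      have key : ∑ j, (a i0 + c j) • b.get j = 0 := by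
        rw [← hsum, h1, Finset.smul_sum, ← Finset.sum_add_distrib]
        simp [add_smul]
      have hall := Fintype.linearIndependent_iff.mp hind _ key
      have hcz : ∀ j, c j ≠ 0 := by
        intro j hcj
        have := hall j
        rw [hcj, add_zero] at this
        exact h0 this
      have hcfull : (Finset.univ.filter fun j => c j ≠ 0) = Finset.univ :=
        Finset.filter_true_of_mem fun j _ => hcz j
      have hca : 1 ≤ (Finset.univ.filter fun k : Fin _ => a k ≠ 0).card :=
        Finset.card_pos.mpr ⟨i0, Finset.mem_filter.mpr ⟨Finset.mem_univ _, h0⟩⟩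
      rw [hrank, Nat.cast_le] at hcard
      rw [hcfull, Finset.card_univ, Fintype.card_fin] at hcard
      omega
    · have hspan : Submodule.span F (Set.range b.get) ≠ ⊤ := by
        intro htop
        exact hind (linearIndependent_of_top_le_span_of_card_eq_finrank htop.ge
          (by rw [Fintype.card_fin, hb]))
      have : ∃ x : V, x ∉ Submodule.span F (Set.range b.get) := by
        by_contra hx
        push_neg at hx
        exact hspan (Submodule.eq_top_iff'.mpr hx)
      obtain ⟨x, hx⟩ := this
      refine ⟨x, ?_⟩
      intro a c hcard hsum i
      by_contra h0
      have hL : ([x].length) = 1 := rfl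
      set i0 : Fin ([x].length) := ⟨0, hL ▸ Nat.one_pos⟩ with hi0
      have hi : i = i0 := fin_one_eq hL i i0
      rw [hi] at h0
      have h1 : ∑ k : Fin ([x].length), a k • [x].get k = a i0 • x := sum_fin_one hL _
      rw [h1] at hsum
      have hmem : a i0 • x ∈ Submodule.span F (Set.range b.get) := by
        have heq : a i0 • x = -∑ j, c j • b.get j := by
          linear_combination (norm := module) hsum
        rw [heq]
        exact Submodule.neg_mem _ (Submodule.sum_mem _ fun j _ =>
          Submodule.smul_mem _ _ (Submodule.subset_span (Set.mem_range_self j)))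
      have : x ∈ Submodule.span F (Set.range b.get) := by
        have := Submodule.smul_mem _ (a i0)⁻¹ hmem
        rwa [smul_smul, inv_mul_cancel₀ h0, one_smul] at this
      exact hx this
  · intro e x hG
    set v : V := ∑ i, e i with hv
    set c : Fin n → F := fun j => e.repr x j with hc
    obtain ⟨t, k1, k2, hk, hz1, hz2⟩ : ∃ t : F, ∃ k1 k2 : Fin (n + 1), k1 ≠ k2 ∧
        (Fin.snoc (fun j : Fin n => t - c j) (-t) : Fin (n + 1) → F) k1 = 0 ∧
        (Fin.snoc (fun j : Fin n => t - c j) (-t) : Fin (n + 1) → F) k2 = 0 := by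
      by_cases hz : ∃ j, c j = 0
      · obtain ⟨j, hj⟩ := hz
        exact ⟨0, Fin.castSucc j, Fin.last n, (Fin.castSucc_lt_last j).ne,
          by simp [hj], by simp⟩
      · push_neg at hz
        have hcardlt : Fintype.card {u : F // u ≠ 0} < Fintype.card (Fin n) := by
          have h1 : Fintype.card {u : F // u ≠ 0} = Fintype.card F - 1 := by
            rw [Fintype.card_subtype_compl, Fintype.card_subtype_eq]
          rw [h1, Fintype.card_fin]
          omega
        obtain ⟨j1, j2, hne, heq⟩ := Fintype.exists_ne_map_eq_of_card_lt
          (fun j : Fin n => (⟨c j, hz j⟩ : {u : F // u ≠ 0})) hcardlt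
        refine ⟨c j1, Fin.castSucc j1, Fin.castSucc j2,
          by simpa [Fin.castSucc_inj] using hne, by simp, ?_⟩
        have h2 : c j2 = c j1 := congrArg Subtype.val heq.symm
        simp [h2]
    set β' : Fin (n + 1) → F := Fin.snoc (fun j : Fin n => t - c j) (-t) with hβ'
    have hy2 : List.ofFn (e : Fin n → V) ++ [v] = List.ofFn (Fin.snoc (e : Fin n → V) v) := by
      conv_rhs => rw [List.ofFn_succ']
      simp [List.concat_eq_append]
    rw [hy2] at hG
    have hlen : (List.ofFn (Fin.snoc (e : Fin n → V) v)).length = n + 1 :=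
      List.length_ofFn
    have hx : ∑ j : Fin n, c j • e j = x := e.sum_repr x
    have hsnocsum : ∑ j : Fin (n + 1), β' j • Fin.snoc (e : Fin n → V) v j = -x := by
      rw [Fin.sum_univ_castSucc]
      simp only [hβ', Fin.snoc_castSucc, Fin.snoc_last, sub_smul, Finset.sum_sub_distrib,
        ← Finset.smul_sum, hx, ← hv]
      module
    have hL : ([x].length) = 1 := rfl
    have hzero : (∑ k : Fin ([x].length), (fun _ => (1:F)) k • [x].get k) +
        ∑ j : Fin (List.ofFn (Fin.snoc (e : Fin n → V) v)).length,
          β' (Fin.cast hlen j) • (List.ofFn (Fin.snoc (e : Fin n → V) v)).get j = 0 := by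
      have h1 : ∑ k : Fin ([x].length), (fun _ => (1:F)) k • [x].get k = x := by
        rw [sum_fin_one hL]; exact one_smul F x
      have h2 : ∑ j : Fin (List.ofFn (Fin.snoc (e : Fin n → V) v)).length,
          β' (Fin.cast hlen j) • (List.ofFn (Fin.snoc (e : Fin n → V) v)).get j
          = ∑ j : Fin (n + 1), β' j • Fin.snoc (e : Fin n → V) v j := by
        apply Fintype.sum_equiv (finCongr hlen)
        intro j
        rw [List.get_ofFn]
        rfl
      rw [h1, h2, hsnocsum, add_neg_cancel]
    have hbound : (((Finset.univ.filter fun k : Fin ([x].length) =>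
          (fun _ => (1:F)) k ≠ 0).card +
        (Finset.univ.filter fun j : Fin (List.ofFn (Fin.snoc (e : Fin n → V) v)).length =>
          β' (Fin.cast hlen j) ≠ 0).card : ℕ) : Cardinal) ≤ Module.rank F V := by
      rw [hrank, Nat.cast_le]
      have hca := card_filter_fin_one hL (fun k => (fun _ => (1:F)) k ≠ 0)
      have hfc : (Finset.univ.filter fun j :
            Fin (List.ofFn (Fin.snoc (e : Fin n → V) v)).length =>
          β' (Fin.cast hlen j) ≠ 0).card
          = (Finset.univ.filter fun j : Fin (n + 1) => β' j ≠ 0).card := by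
        apply Finset.card_equiv (finCongr hlen)
        intro j
        simp
      have hsub : (Finset.univ.filter fun j : Fin (n + 1) => β' j ≠ 0) ⊆
          ((Finset.univ.erase k1).erase k2) := by
        intro j hj
        rw [Finset.mem_filter] at hj
        rw [Finset.mem_erase, Finset.mem_erase]
        exact ⟨fun hjk => hj.2 (hjk ▸ hz2), fun hjk => hj.2 (hjk ▸ hz1), Finset.mem_univ j⟩
      have hcb : (Finset.univ.filter fun j : Fin (n + 1) => β' j ≠ 0).card ≤ n - 1 := by
        calc _ ≤ ((Finset.univ.erase k1).erase k2).card := Finset.card_le_card hsub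
        _ = n - 1 := by
            rw [Finset.card_erase_of_mem (Finset.mem_erase.mpr ⟨hk.symm, Finset.mem_univ _⟩),
              Finset.card_erase_of_mem (Finset.mem_univ _)]
            simp
      rw [hfc]
      refine le_trans (add_le_add (card_filter_fin_one hL _) hcb) ?_
      omega
    have := hG (fun _ => (1:F)) (fun j => β' (Fin.cast hlen j)) hbound hzero
      ⟨0, hL ▸ Nat.one_pos⟩
    exact one_ne_zero this
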